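/- If h(P,J) is additive in J for each fixed P, and X₁ ⊆ X₂ ⊆ ⋯ is an increasing sequence of sets with union X, then V(h; I; X) = lim_{j→∞} V(h; I; Xⱼ). In particular, outer measure is continuous from below: μ*(X ∩ I) = lim_{j→∞} μ*(Xⱼ ∩ I). -/

import Mathlib

open Set Filter

/-- A brick (compact non-degenerate interval) in `ι → ℝ`. -/
structure Brick (ι : Type*) [Fintype ι] where
  lower : ι → ℝ
  upper : ι → ℝ
  lt : ∀ j, lower j < upper j

variable {ι : Type*} [Fintype ι]

namespace Brick

/-- The underlying closed set of a brick. -/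
def toSet (I : Brick ι) : Set (ι → ℝ) := {x | ∀ j, x j ∈ Set.Icc (I.lower j) (I.upper j)}

/-- The open interior of a brick. -/
def inter (I : Brick ι) : Set (ι → ℝ) := {x | ∀ j, x j ∈ Set.Ioo (I.lower j) (I.upper j)}

/-- The volume of a brick. -/
noncomputable def vol (I : Brick ι) : ℝ := ∏ j, (I.upper j - I.lower j)

end Brick

/-- A tagged division of a brick `I`: finitely many non-overlapping sub-bricks covering `I`,
each with a tag point belonging to it. -/
structure TaggedDiv {ι : Type*} [Fintype ι] (I : Brick ι) where
  pieces : Finset (Brick ι × (ι → ℝ))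
  subset_of_mem : ∀ p ∈ pieces, (p.1 : Brick ι).toSet ⊆ I.toSet
  tag_mem : ∀ p ∈ pieces, p.2 ∈ (p.1 : Brick ι).toSet
  nonoverlap : ∀ p ∈ pieces, ∀ q ∈ pieces, p ≠ q →
    (p.1 : Brick ι).inter ∩ (q.1 : Brick ι).inter = ∅
  cover : I.toSet = ⋃ p ∈ pieces, (p.1 : Brick ι).toSet

/-- A gauge on a brick: a function positive at each point of the brick. -/
def IsGauge (I : Brick ι) (δ : (ι → ℝ) → ℝ) : Prop := ∀ x ∈ I.toSet, 0 < δ x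

/-- A tagged division is compatible with the gauge `δ` if each brick lies in the open ball
of radius `δ` about its tag. -/
def Compat {I : Brick ι} (D : TaggedDiv I) (δ : (ι → ℝ) → ℝ) : Prop :=
  ∀ p ∈ D.pieces, (p.1 : Brick ι).toSet ⊆ Metric.ball p.2 (δ p.2)

/-- The Riemann sum of `f` over a tagged division. -/
noncomputable def riemannSum {I : Brick ι} (f : (ι → ℝ) → ℝ) (D : TaggedDiv I) : ℝ :=
  ∑ p ∈ D.pieces, f p.2 * (p.1 : Brick ι).vol

/-- `f` has Henstock–Kurzweil integral `A` on the brick `I`. -/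
def HasHK (I : Brick ι) (f : (ι → ℝ) → ℝ) (A : ℝ) : Prop :=
  ∀ ε > 0, ∃ δ : (ι → ℝ) → ℝ, IsGauge I δ ∧
    ∀ D : TaggedDiv I, Compat D δ → |riemannSum f D - A| < ε

open scoped ENNReal Classical

/-- The sum of `|h|` over a tagged division, for an interval-point function `h`. -/
noncomputable def varSum {I : Brick ι} (h : Brick ι → (ι → ℝ) → ℝ) (D : TaggedDiv I) : ℝ :=
  ∑ p ∈ D.pieces, |h p.1 p.2|

/-- The (Henstock) variation of an interval-point function `h` on a brick `I`. -/
noncomputable def variation (I : Brick ι) (h : Brick ι → (ι → ℝ) → ℝ) : ℝ≥0∞ :=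
  ⨅ δ ∈ {δ : (ι → ℝ) → ℝ | IsGauge I δ},
    ⨆ D ∈ {D : TaggedDiv I | Compat D δ}, ENNReal.ofReal (varSum h D)

/-- The variation of `h` on `I` with tags restricted to the set `X`. -/
noncomputable def variationOn (I : Brick ι) (h : Brick ι → (ι → ℝ) → ℝ)
    (X : Set (ι → ℝ)) : ℝ≥0∞ :=
  variation I (fun J P => if P ∈ X then h J P else 0)

/-- The outer measure of a set `X` in the brick `I`, defined via the Henstock variation of
the volume function restricted to `X`. -/
noncomputable def mustar (I : Brick ι) (X : Set (ι → ℝ)) : ℝ≥0∞ :=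
  variationOn I (fun J _ => J.vol) X


namespace Brick

theorem toSet_eq (J : Brick ι) : J.toSet = Set.Icc J.lower J.upper := by
  ext x; simp [toSet, Set.mem_Icc, Pi.le_def, forall_and]

theorem mem_toSet {J : Brick ι} {x : ι → ℝ} :
    x ∈ J.toSet ↔ ∀ c, J.lower c ≤ x c ∧ x c ≤ J.upper c := by
  simp [toSet, Set.mem_Icc]

theorem mem_inter {J : Brick ι} {x : ι → ℝ} :
    x ∈ J.inter ↔ ∀ c, J.lower c < x c ∧ x c < J.upper c := by
  simp [inter, Set.mem_Ioo]

/-- The midpoint of a brick. -/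
noncomputable def mid (J : Brick ι) : ι → ℝ := fun c => (J.lower c + J.upper c) / 2

theorem mid_mem_inter (J : Brick ι) : J.mid ∈ J.inter := by
  intro c
  constructor <;> [skip; skip] <;>
    · have := J.lt c; simp only [mid]; linarith

theorem inter_subset_toSet (J : Brick ι) : J.inter ⊆ J.toSet := fun x hx c =>
  ⟨(hx c).1.le, (hx c).2.le⟩

theorem lower_mem_toSet (J : Brick ι) : J.lower ∈ J.toSet := fun c => ⟨le_rfl, (J.lt c).le⟩

theorem upper_mem_toSet (J : Brick ι) : J.upper ∈ J.toSet := fun c => ⟨(J.lt c).le, le_rfl⟩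

theorem mid_mem_toSet (J : Brick ι) : J.mid ∈ J.toSet := J.inter_subset_toSet J.mid_mem_inter

/-- coordinatewise bounds from set inclusion -/
theorem bounds_of_subset {J K : Brick ι} (h : J.toSet ⊆ K.toSet) (c : ι) :
    K.lower c ≤ J.lower c ∧ J.upper c ≤ K.upper c := by
  constructor
  · exact (h J.lower_mem_toSet c).1
  · exact (h J.upper_mem_toSet c).2

theorem inter_mono {J K : Brick ι} (h : J.toSet ⊆ K.toSet) : J.inter ⊆ K.inter := by
  intro x hx c
  obtain ⟨h1, h2⟩ := bounds_of_subset h c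
  exact ⟨lt_of_le_of_lt h1 (hx c).1, lt_of_lt_of_le (hx c).2 h2⟩

/-- bricks contained in non-overlapping bricks are non-overlapping -/
theorem nonoverlap_of_subset {J J' K K' : Brick ι} (hJ : J.toSet ⊆ K.toSet)
    (hJ' : J'.toSet ⊆ K'.toSet) (h : K.inter ∩ K'.inter = ∅) : J.inter ∩ J'.inter = ∅ := by
  rw [Set.eq_empty_iff_forall_notMem] at h ⊢
  intro x hx
  exact h x ⟨inter_mono hJ hx.1, inter_mono hJ' hx.2⟩

theorem ne_empty_inter (J : Brick ι) : J.inter ≠ ∅ :=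
  fun h => (Set.eq_empty_iff_forall_notMem.1 h) J.mid J.mid_mem_inter

theorem vol_nonneg (J : Brick ι) : 0 ≤ J.vol :=
  Finset.prod_nonneg fun c _ => sub_nonneg.2 (J.lt c).le

end Brick

/-! ### Partial divisions -/

/-- A partial (tagged) division of `I`: like `TaggedDiv` but without the covering property. -/
def Pdiv (I : Brick ι) (π : Finset (Brick ι × (ι → ℝ))) : Prop :=
  (∀ p ∈ π, (p.1 : Brick ι).toSet ⊆ I.toSet) ∧
  (∀ p ∈ π, p.2 ∈ (p.1 : Brick ι).toSet) ∧
  (∀ p ∈ π, ∀ q ∈ π, p ≠ q → (p.1 : Brick ι).inter ∩ (q.1 : Brick ι).inter = ∅)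

/-- fineness of a family w.r.t. a gauge -/
def Fine (δ : (ι → ℝ) → ℝ) (π : Finset (Brick ι × (ι → ℝ))) : Prop :=
  ∀ p ∈ π, (p.1 : Brick ι).toSet ⊆ Metric.ball p.2 (δ p.2)

/-- tags belong to `Y` -/
def TagIn (Y : Set (ι → ℝ)) (π : Finset (Brick ι × (ι → ℝ))) : Prop :=
  ∀ p ∈ π, p.2 ∈ Y

/-- all bricks are contained in bricks of the family `𝒦` -/
def InFam (𝒦 : Finset (Brick ι)) (π : Finset (Brick ι × (ι → ℝ))) : Prop :=
  ∀ p ∈ π, ∃ K ∈ 𝒦, (p.1 : Brick ι).toSet ⊆ K.toSet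

noncomputable def psum (h : Brick ι → (ι → ℝ) → ℝ) (π : Finset (Brick ι × (ι → ℝ))) : ℝ :=
  ∑ p ∈ π, |h p.1 p.2|

theorem psum_nonneg (h : Brick ι → (ι → ℝ) → ℝ) (π : Finset (Brick ι × (ι → ℝ))) :
    0 ≤ psum h π := Finset.sum_nonneg fun _ _ => abs_nonneg _

theorem Pdiv.eq_of_fst_eq {I : Brick ι} {π} (hπ : Pdiv I π) {p q : Brick ι × (ι → ℝ)}
    (hp : p ∈ π) (hq : q ∈ π) (h : p.1 = q.1) : p = q := by
  by_contra hne
  have h2 := hπ.2.2 p hp q hq hne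
  rw [h] at h2
  simp only [Set.inter_self] at h2
  exact q.1.ne_empty_inter h2

/-- restriction of `h` to tags in `Y` -/
noncomputable def restr (h : Brick ι → (ι → ℝ) → ℝ) (Y : Set (ι → ℝ)) : Brick ι → (ι → ℝ) → ℝ :=
  fun J P => if P ∈ Y then h J P else 0

theorem varSum_restr_eq_psum {I : Brick ι} (h : Brick ι → (ι → ℝ) → ℝ) (Y : Set (ι → ℝ))
    (D : TaggedDiv I) :
    varSum (restr h Y) D = psum h (D.pieces.filter (fun p => p.2 ∈ Y)) := by
  rw [varSum, psum, Finset.sum_filter]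
  refine Finset.sum_congr rfl fun p _ => ?_
  by_cases hp : p.2 ∈ Y <;> simp [restr, hp]

/-- a TaggedDiv gives a Pdiv, restricted to tags in Y -/
theorem pdiv_filter_of_taggedDiv {I : Brick ι} (D : TaggedDiv I) (Y : Set (ι → ℝ)) :
    Pdiv I (D.pieces.filter (fun p => p.2 ∈ Y)) := by
  refine ⟨fun p hp => D.subset_of_mem p (Finset.mem_filter.1 hp).1,
    fun p hp => D.tag_mem p (Finset.mem_filter.1 hp).1,
    fun p hp q hq hne => D.nonoverlap p (Finset.mem_filter.1 hp).1 q (Finset.mem_filter.1 hq).1 hne⟩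

theorem fine_filter_of_compat {I : Brick ι} {D : TaggedDiv I} {δ} (hD : Compat D δ)
    (Y : Set (ι → ℝ)) : Fine δ (D.pieces.filter (fun p => p.2 ∈ Y)) :=
  fun p hp => hD p (Finset.mem_filter.1 hp).1

theorem tagIn_filter {I : Brick ι} (D : TaggedDiv I) (Y : Set (ι → ℝ)) :
    TagIn Y (D.pieces.filter (fun p => p.2 ∈ Y)) :=
  fun _ hp => (Finset.mem_filter.1 hp).2
/-! ### Bridge to `BoxIntegral` -/

open BoxIntegral

/-- the half-open box of a brick -/
def Brick.toBox (J : Brick ι) : BoxIntegral.Box ι := ⟨J.lower, J.upper, J.lt⟩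

/-- the brick of a box -/
def boxToBrick (B : BoxIntegral.Box ι) : Brick ι := ⟨B.lower, B.upper, B.lower_lt_upper⟩

@[simp] theorem boxToBrick_toBox (J : Brick ι) : boxToBrick J.toBox = J := rfl

theorem toSet_eq_Icc_toBox (J : Brick ι) : J.toSet = Box.Icc J.toBox := by
  rw [Brick.toSet_eq, Box.Icc_def]; rfl

theorem toSet_boxToBrick (B : BoxIntegral.Box ι) : (boxToBrick B).toSet = Box.Icc B := by
  rw [Brick.toSet_eq, Box.Icc_def]; rfl

theorem toBox_injective : Function.Injective (Brick.toBox (ι := ι)) := by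
  intro J K h
  cases J; cases K
  simpa [Brick.toBox, BoxIntegral.Box.mk.injEq, Brick.mk.injEq] using h

theorem coe_toBox_subset (J : Brick ι) : (J.toBox : Set (ι → ℝ)) ⊆ J.toSet := by
  rw [toSet_eq_Icc_toBox]; exact Box.coe_subset_Icc

/-- non-overlapping bricks give disjoint half-open boxes -/
theorem disjoint_toBox {J K : Brick ι} (h : J.inter ∩ K.inter = ∅) :
    Disjoint (J.toBox : Set (ι → ℝ)) (K.toBox : Set (ι → ℝ)) := by
  rw [Set.disjoint_left]
  intro x hxJ hxK
  rw [Box.mem_coe, Box.mem_def] at hxJ hxK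
  simp only [Brick.toBox] at hxJ hxK
  set y : ι → ℝ := fun c => max ((x c + J.lower c) / 2) ((x c + K.lower c) / 2) with hy
  have hyJ : y ∈ J.inter := by
    intro c
    have h1 := (hxJ c).1; have h2 := (hxJ c).2; have h3 := (hxK c).1
    constructor
    · exact lt_max_of_lt_left (by linarith)
    · exact lt_of_lt_of_le (max_lt (by linarith) (by linarith)) h2
  have hyK : y ∈ K.inter := by
    intro c
    have h1 := (hxK c).1; have h2 := (hxK c).2; have h3 := (hxJ c).1
    constructor
    · exact lt_max_of_lt_right (by linarith)
    · exact lt_of_lt_of_le (max_lt (by linarith) (by linarith)) h2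
  exact (Set.eq_empty_iff_forall_notMem.1 h) y ⟨hyJ, hyK⟩

/-- every point of the closed box is a limit of points of the half-open box -/
theorem Icc_subset_closure_coe (B : BoxIntegral.Box ι) :
    Box.Icc B ⊆ closure (B : Set (ι → ℝ)) := by
  intro x hx
  rw [Box.Icc_def, Set.mem_Icc] at hx
  rw [Metric.mem_closure_iff]
  intro ε hε
  set R : ℝ := dist B.upper B.lower + 1 with hR
  have hR0 : 0 < R := by positivity
  set t : ℝ := min (ε / (2 * R)) 1 with ht
  have ht0 : 0 < t := lt_min (by positivity) one_pos
  have ht1 : t ≤ 1 := min_le_right _ _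
  refine ⟨fun c => x c + t * (B.upper c - x c), ?_, ?_⟩
  · rw [Box.mem_coe, Box.mem_def]
    intro c
    have hl := hx.1 c; have hu := hx.2 c; have hlu := B.lower_lt_upper c
    constructor
    · nlinarith
    · nlinarith
  · have hb : ∀ c, dist (x c + t * (B.upper c - x c)) (x c) ≤ t * R := by
      intro c
      rw [Real.dist_eq]
      have h1 : |x c + t * (B.upper c - x c) - x c| = t * (B.upper c - x c) := by
        rw [add_sub_cancel_left, abs_of_nonneg]
        have := hx.2 c
        nlinarith
      rw [h1]
      have h2 : B.upper c - x c ≤ R := by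
        have h3 : dist (B.upper c) (B.lower c) ≤ dist B.upper B.lower := dist_le_pi_dist _ _ c
        rw [Real.dist_eq, abs_of_nonneg (sub_nonneg.2 (B.lower_le_upper c))] at h3
        have := hx.1 c
        simp only [hR]; linarith
      nlinarith
    have : dist (fun c => x c + t * (B.upper c - x c)) x ≤ t * R :=
      dist_pi_le_iff (by positivity) |>.2 hb
    have htR : t * R ≤ ε / 2 := by
      have h4 : t ≤ ε / (2 * R) := min_le_left _ _
      have h5 : ε / (2 * R) * R = ε / 2 := by field_simp
      nlinarith
    rw [dist_comm]
    calc dist (fun c => x c + t * (B.upper c - x c)) x ≤ t * R := this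
      _ ≤ ε / 2 := htR
      _ < ε := by linarith

/-- The extension lemma: every fine partial division extends to a fine tagged division. -/
theorem exists_taggedDiv_extend (I : Brick ι) (δ : (ι → ℝ) → ℝ) (hδ : IsGauge I δ)
    (π : Finset (Brick ι × (ι → ℝ))) (hπ : Pdiv I π) (hf : Fine δ π) :
    ∃ D : TaggedDiv I, Compat D δ ∧ π ⊆ D.pieces := by
  classical
  -- the tag function
  set t : BoxIntegral.Box ι → ι → ℝ := fun B =>
    if hB : ∃ p, p ∈ π ∧ Brick.toBox p.1 = B then hB.choose.2 else I.lower with htdef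
  have ht : ∀ p ∈ π, t p.1.toBox = p.2 := by
    intro p hp
    have hB : ∃ q, q ∈ π ∧ Brick.toBox q.1 = p.1.toBox := ⟨p, hp, rfl⟩
    have hspec := hB.choose_spec
    have h1 : hB.choose.1 = p.1 := toBox_injective hspec.2
    have h2 : hB.choose = p := hπ.eq_of_fst_eq hspec.1 hp h1
    simp only [htdef, dif_pos hB, h2]
  -- the tagged prepartition given by π
  set τ₀ : TaggedPrepartition I.toBox :=
    { boxes := π.image (fun p => p.1.toBox)
      le_of_mem' := by
        intro B hB
        obtain ⟨p, hp, rfl⟩ := Finset.mem_image.1 hB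
        rw [Box.le_iff_Icc, ← toSet_eq_Icc_toBox, ← toSet_eq_Icc_toBox]
        exact hπ.1 p hp
      pairwiseDisjoint := by
        intro B₁ h₁ B₂ h₂ hne
        simp only [Finset.coe_image, Set.mem_image, Finset.mem_coe] at h₁ h₂
        obtain ⟨p, hp, rfl⟩ := h₁
        obtain ⟨q, hq, rfl⟩ := h₂
        have hpq : p ≠ q := fun h => hne (by rw [h])
        exact disjoint_toBox (hπ.2.2 p hp q hq hpq)
      tag := t
      tag_mem_Icc := by
        intro B
        simp only [htdef]
        split_ifs with hB
        · have hspec := hB.choose_spec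
          rw [← toSet_eq_Icc_toBox]
          exact hπ.1 _ hspec.1 (hπ.2.1 _ hspec.1)
        · exact Box.lower_mem_Icc _ } with hτ₀def
  -- the radius function
  set r : (ι → ℝ) → Set.Ioi (0 : ℝ) := fun y =>
    ⟨if hy : y ∈ I.toSet then δ y / 2 else 1, by
      split_ifs with hy
      · exact Set.mem_Ioi.2 (half_pos (hδ y hy))
      · exact Set.mem_Ioi.2 zero_lt_one⟩ with hrdef
  set τ : TaggedPrepartition I.toBox :=
    τ₀.unionComplToSubordinate τ₀.toPrepartition.compl (Prepartition.iUnion_compl _) r with hτdef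
  have hτboxes : τ.boxes = τ₀.boxes ∪ (τ₀.toPrepartition.compl.toSubordinate r).boxes := rfl
  have hPart : τ.IsPartition :=
    TaggedPrepartition.isPartition_unionComplToSubordinate _ _ _ _
  have htagleft : ∀ B ∈ τ₀.boxes, τ.tag B = t B := by
    intro B hB
    exact TaggedPrepartition.disjUnion_tag_of_mem_left _ hB
  have htagright : ∀ B ∈ τ.boxes, B ∉ τ₀.boxes →
      τ.tag B = (τ₀.toPrepartition.compl.toSubordinate r).tag B := by
    intro B hB hB'
    rw [hτboxes, Finset.mem_union] at hB
    exact TaggedPrepartition.disjUnion_tag_of_mem_right _ (hB.resolve_left hB')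
  -- facts about the subordinate part
  have hsub := Prepartition.isSubordinate_toSubordinate τ₀.toPrepartition.compl r
  have hhen := Prepartition.isHenstock_toSubordinate τ₀.toPrepartition.compl r
  -- define the TaggedDiv
  refine ⟨{ pieces := τ.boxes.image (fun B => (boxToBrick B, τ.tag B))
            subset_of_mem := ?_
            tag_mem := ?_
            nonoverlap := ?_
            cover := ?_ }, ?_, ?_⟩
  · intro p hp
    obtain ⟨B, hB, rfl⟩ := Finset.mem_image.1 hp
    rw [toSet_boxToBrick, toSet_eq_Icc_toBox, ← Box.le_iff_Icc]
    exact τ.toPrepartition.le_of_mem hB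
  · intro p hp
    obtain ⟨B, hB, rfl⟩ := Finset.mem_image.1 hp
    rw [toSet_boxToBrick]
    by_cases hB0 : B ∈ τ₀.boxes
    · rw [htagleft B hB0]
      obtain ⟨q, hq, rfl⟩ := Finset.mem_image.1 hB0
      rw [ht q hq, ← toSet_eq_Icc_toBox]
      exact hπ.2.1 q hq
    · rw [htagright B hB hB0]
      rw [hτboxes, Finset.mem_union] at hB
      exact hhen _ (hB.resolve_left hB0)
  · intro p hp q hq hne
    obtain ⟨B₁, hB₁, rfl⟩ := Finset.mem_image.1 hp
    obtain ⟨B₂, hB₂, rfl⟩ := Finset.mem_image.1 hq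
    have hBne : B₁ ≠ B₂ := by
      rintro rfl; exact hne rfl
    have hdisj := τ.toPrepartition.pairwiseDisjoint hB₁ hB₂ hBne
    apply Set.eq_empty_iff_forall_notMem.2
    intro x hx
    have h1 : x ∈ (B₁ : Set (ι → ℝ)) := by
      intro c
      have hc := hx.1 c
      exact ⟨hc.1, hc.2.le⟩
    have h2 : x ∈ (B₂ : Set (ι → ℝ)) := by
      intro c
      have hc := hx.2 c
      exact ⟨hc.1, hc.2.le⟩
    exact Set.disjoint_left.1 hdisj h1 h2
  · apply subset_antisymm
    · intro x hx
      rw [toSet_eq_Icc_toBox] at hx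
      have hx' : x ∈ closure (I.toBox : Set (ι → ℝ)) := Icc_subset_closure_coe _ hx
      have hcov : (I.toBox : Set (ι → ℝ)) ⊆ ⋃ B ∈ τ.boxes, Box.Icc B := by
        rw [← hPart.iUnion_eq]
        intro y hy
        obtain ⟨B, hB, hyB⟩ := (TaggedPrepartition.mem_iUnion τ).1 hy
        exact Set.mem_biUnion hB (Box.coe_subset_Icc hyB)
      have hclosed : IsClosed (⋃ B ∈ τ.boxes, Box.Icc B) := by
        apply Set.Finite.isClosed_biUnion (τ.boxes.finite_toSet)
        intro B _
        rw [Box.Icc_def]; exact isClosed_Icc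
      have hx'' : x ∈ ⋃ B ∈ τ.boxes, Box.Icc B :=
        (hclosed.closure_subset_iff.2 hcov) hx'
      rw [Set.mem_iUnion₂] at hx''
      obtain ⟨B, hB, hxB⟩ := hx''
      apply Set.mem_biUnion (Finset.mem_image_of_mem (fun B => (boxToBrick B, τ.tag B)) hB)
      rwa [toSet_boxToBrick]
    · apply Set.iUnion₂_subset
      intro p hp
      obtain ⟨B, hB, rfl⟩ := Finset.mem_image.1 hp
      rw [toSet_boxToBrick, toSet_eq_Icc_toBox, ← Box.le_iff_Icc]
      exact τ.toPrepartition.le_of_mem hB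
  · -- Compat
    intro p hp
    obtain ⟨B, hB, rfl⟩ := Finset.mem_image.1 hp
    by_cases hB0 : B ∈ τ₀.boxes
    · rw [htagleft B hB0]
      obtain ⟨q, hq, rfl⟩ := Finset.mem_image.1 hB0
      rw [ht q hq]
      rw [show boxToBrick q.1.toBox = q.1 from rfl]
      exact hf q hq
    · rw [htagright B hB hB0]
      rw [hτboxes, Finset.mem_union] at hB
      have hBsub := hB.resolve_left hB0
      have h1 := hsub B hBsub
      set y := (τ₀.toPrepartition.compl.toSubordinate r).tag B with hy
      have hyI : y ∈ I.toSet := by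
        rw [toSet_eq_Icc_toBox]
        exact (τ₀.toPrepartition.compl.toSubordinate r).tag_mem_Icc B
      have hr : (r y : ℝ) = δ y / 2 := by simp only [hrdef, dif_pos hyI]
      rw [toSet_boxToBrick]
      refine subset_trans h1 ?_
      rw [hr]
      exact Metric.closedBall_subset_ball (by have := hδ y hyI; linarith)
  · -- π ⊆ pieces
    intro p hp
    rw [Finset.mem_image]
    refine ⟨p.1.toBox, ?_, ?_⟩
    · rw [hτboxes, Finset.mem_union]
      left
      exact Finset.mem_image_of_mem _ hp
    · rw [htagleft _ (Finset.mem_image_of_mem _ hp), ht p hp, boxToBrick_toBox]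
/-! ### Localized variations -/

variable (I : Brick ι) (h : Brick ι → (ι → ℝ) → ℝ)

/-- the gauge-fixed variation (full divisions) -/
noncomputable def Wfun (Y : Set (ι → ℝ)) (δ : (ι → ℝ) → ℝ) : ℝ≥0∞ :=
  ⨆ D ∈ {D : TaggedDiv I | Compat D δ}, ENNReal.ofReal (varSum (restr h Y) D)

theorem variationOn_eq (Y : Set (ι → ℝ)) :
    variationOn I h Y = ⨅ δ ∈ {δ : (ι → ℝ) → ℝ | IsGauge I δ}, Wfun I h Y δ := rfl

/-- candidates for the localized variation -/
def PC (δ : (ι → ℝ) → ℝ) (Y : Set (ι → ℝ)) (𝒦 : Finset (Brick ι)) :=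
  {π : Finset (Brick ι × (ι → ℝ)) // Pdiv I π ∧ Fine δ π ∧ TagIn Y π ∧ InFam 𝒦 π}

instance (δ : (ι → ℝ) → ℝ) (Y : Set (ι → ℝ)) (𝒦 : Finset (Brick ι)) :
    Nonempty (PC I δ Y 𝒦) :=
  ⟨⟨∅, ⟨fun p hp => absurd hp (Finset.notMem_empty p),
        fun p hp => absurd hp (Finset.notMem_empty p),
        fun p hp => absurd hp (Finset.notMem_empty p)⟩,
      fun p hp => absurd hp (Finset.notMem_empty p),
      fun p hp => absurd hp (Finset.notMem_empty p),
      fun p hp => absurd hp (Finset.notMem_empty p)⟩⟩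

/-- the localized gauge-fixed variation (partial divisions inside the family `𝒦`) -/
noncomputable def Ploc (δ : (ι → ℝ) → ℝ) (Y : Set (ι → ℝ)) (𝒦 : Finset (Brick ι)) : ℝ≥0∞ :=
  ⨆ π : PC I δ Y 𝒦, ENNReal.ofReal (psum h π.1)

/-- the localized variation -/
noncomputable def Mloc (Y : Set (ι → ℝ)) (𝒦 : Finset (Brick ι)) : ℝ≥0∞ :=
  ⨅ δ ∈ {δ : (ι → ℝ) → ℝ | IsGauge I δ}, Ploc I h δ Y 𝒦

variable {I h}

theorem le_Wfun_of_pdiv {δ : (ι → ℝ) → ℝ} (hδ : IsGauge I δ) {Y : Set (ι → ℝ)}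
    {π : Finset (Brick ι × (ι → ℝ))} (hπ : Pdiv I π) (hfine : Fine δ π) (htag : TagIn Y π) :
    ENNReal.ofReal (psum h π) ≤ Wfun I h Y δ := by
  obtain ⟨D, hD, hsub⟩ := exists_taggedDiv_extend I δ hδ π hπ hfine
  have h1 : psum h π ≤ varSum (restr h Y) D := by
    rw [varSum_restr_eq_psum]
    apply Finset.sum_le_sum_of_subset_of_nonneg
    · intro p hp
      exact Finset.mem_filter.2 ⟨hsub hp, htag p hp⟩
    · exact fun p _ _ => abs_nonneg _
  exact le_trans (ENNReal.ofReal_le_ofReal h1) (le_iSup₂_of_le D hD le_rfl)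

theorem Ploc_le_Wfun {δ : (ι → ℝ) → ℝ} (hδ : IsGauge I δ) (Y : Set (ι → ℝ))
    (𝒦 : Finset (Brick ι)) : Ploc I h δ Y 𝒦 ≤ Wfun I h Y δ :=
  iSup_le fun π => le_Wfun_of_pdiv hδ π.2.1 π.2.2.1 π.2.2.2.1

theorem Ploc_mono_gauge {δ δ' : (ι → ℝ) → ℝ} (hle : ∀ x, δ x ≤ δ' x) (Y : Set (ι → ℝ))
    (𝒦 : Finset (Brick ι)) : Ploc I h δ Y 𝒦 ≤ Ploc I h δ' Y 𝒦 := by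
  refine iSup_le fun π => ?_
  refine le_iSup_of_le ⟨π.1, π.2.1, ?_, π.2.2.2.1, π.2.2.2.2⟩ le_rfl
  intro p hp
  exact subset_trans (π.2.2.1 p hp) (Metric.ball_subset_ball (hle p.2))

theorem Ploc_mono_Y {δ : (ι → ℝ) → ℝ} {Y Y' : Set (ι → ℝ)} (hY : Y ⊆ Y')
    (𝒦 : Finset (Brick ι)) : Ploc I h δ Y 𝒦 ≤ Ploc I h δ Y' 𝒦 := by
  refine iSup_le fun π => ?_
  exact le_iSup_of_le ⟨π.1, π.2.1, π.2.2.1, fun p hp => hY (π.2.2.2.1 p hp), π.2.2.2.2⟩ le_rfl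

theorem Mloc_mono_Y {Y Y' : Set (ι → ℝ)} (hY : Y ⊆ Y') (𝒦 : Finset (Brick ι)) :
    Mloc I h Y 𝒦 ≤ Mloc I h Y' 𝒦 :=
  iInf_mono fun δ => iInf_mono fun _ => Ploc_mono_Y hY 𝒦

/-- combining partial divisions inside non-overlapping families -/
theorem pdiv_union {π₁ π₂ : Finset (Brick ι × (ι → ℝ))} {𝒦₁ 𝒦₂ : Finset (Brick ι)}
    (hπ₁ : Pdiv I π₁) (hπ₂ : Pdiv I π₂) (hin₁ : InFam 𝒦₁ π₁) (hin₂ : InFam 𝒦₂ π₂)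
    (hcross : ∀ K ∈ 𝒦₁, ∀ K' ∈ 𝒦₂, K.inter ∩ K'.inter = ∅) :
    Pdiv I (π₁ ∪ π₂) ∧ Disjoint π₁ π₂ ∧ psum h (π₁ ∪ π₂) = psum h π₁ + psum h π₂ := by
  have hnov : ∀ p ∈ π₁, ∀ q ∈ π₂, p.1.inter ∩ q.1.inter = ∅ := by
    intro p hp q hq
    obtain ⟨K, hK, hpK⟩ := hin₁ p hp
    obtain ⟨K', hK', hqK⟩ := hin₂ q hq
    exact Brick.nonoverlap_of_subset hpK hqK (hcross K hK K' hK')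
  have hdisj : Disjoint π₁ π₂ := by
    rw [Finset.disjoint_left]
    intro p hp₁ hp₂
    have := hnov p hp₁ p hp₂
    rw [Set.inter_self] at this
    exact p.1.ne_empty_inter this
  refine ⟨⟨?_, ?_, ?_⟩, hdisj, ?_⟩
  · intro p hp
    rcases Finset.mem_union.1 hp with hp | hp
    exacts [hπ₁.1 p hp, hπ₂.1 p hp]
  · intro p hp
    rcases Finset.mem_union.1 hp with hp | hp
    exacts [hπ₁.2.1 p hp, hπ₂.2.1 p hp]
  · intro p hp q hq hne
    rcases Finset.mem_union.1 hp with hp | hp <;> rcases Finset.mem_union.1 hq with hq | hq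
    · exact hπ₁.2.2 p hp q hq hne
    · exact hnov p hp q hq
    · rw [Set.inter_comm]; exact hnov q hq p hp
    · exact hπ₂.2.2 p hp q hq hne
  · rw [psum, psum, psum, Finset.sum_union hdisj]

theorem Ploc_add_Ploc_le {δ : (ι → ℝ) → ℝ} {Y : Set (ι → ℝ)} {𝒦₁ 𝒦₂ : Finset (Brick ι)}
    (hcross : ∀ K ∈ 𝒦₁, ∀ K' ∈ 𝒦₂, K.inter ∩ K'.inter = ∅) :
    Ploc I h δ Y 𝒦₁ + Ploc I h δ Y 𝒦₂ ≤ Ploc I h δ Y (𝒦₁ ∪ 𝒦₂) := by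
  refine ENNReal.iSup_add_iSup_le fun π₁ π₂ => ?_
  obtain ⟨hpd, _, hps⟩ := pdiv_union (h := h) π₁.2.1 π₂.2.1 π₁.2.2.2.2 π₂.2.2.2.2 hcross
  have hcand : Pdiv I (π₁.1 ∪ π₂.1) ∧ Fine δ (π₁.1 ∪ π₂.1) ∧ TagIn Y (π₁.1 ∪ π₂.1) ∧
      InFam (𝒦₁ ∪ 𝒦₂) (π₁.1 ∪ π₂.1) := by
    refine ⟨hpd, ?_, ?_, ?_⟩
    · intro p hp
      rcases Finset.mem_union.1 hp with hp | hp
      exacts [π₁.2.2.1 p hp, π₂.2.2.1 p hp]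
    · intro p hp
      rcases Finset.mem_union.1 hp with hp | hp
      exacts [π₁.2.2.2.1 p hp, π₂.2.2.2.1 p hp]
    · intro p hp
      rcases Finset.mem_union.1 hp with hp | hp
      · obtain ⟨K, hK, hsub⟩ := π₁.2.2.2.2 p hp
        exact ⟨K, Finset.mem_union_left _ hK, hsub⟩
      · obtain ⟨K, hK, hsub⟩ := π₂.2.2.2.2 p hp
        exact ⟨K, Finset.mem_union_right _ hK, hsub⟩
  refine le_trans ?_ (le_iSup_of_le ⟨π₁.1 ∪ π₂.1, hcand⟩ le_rfl)
  rw [← ENNReal.ofReal_add (psum_nonneg h π₁.1) (psum_nonneg h π₂.1), hps]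

theorem sum_Ploc_le {δ : (ι → ℝ) → ℝ} {Y : Set (ι → ℝ)} (s : Finset ℕ)
    (F : ℕ → Finset (Brick ι))
    (hcross : ∀ i ∈ s, ∀ j ∈ s, i ≠ j → ∀ K ∈ F i, ∀ K' ∈ F j, K.inter ∩ K'.inter = ∅) :
    ∑ i ∈ s, Ploc I h δ Y (F i) ≤ Ploc I h δ Y (s.biUnion F) := by
  classical
  induction s using Finset.induction_on with
  | empty => simp
  | @insert a s ha ih =>
    rw [Finset.sum_insert ha, Finset.biUnion_insert]
    have h1 : ∑ i ∈ s, Ploc I h δ Y (F i) ≤ Ploc I h δ Y (s.biUnion F) := by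
      apply ih
      intro i hi j hj hij
      exact hcross i (Finset.mem_insert_of_mem hi) j (Finset.mem_insert_of_mem hj) hij
    refine le_trans (add_le_add le_rfl h1) ?_
    apply Ploc_add_Ploc_le
    intro K hK K' hK'
    rw [Finset.mem_biUnion] at hK'
    obtain ⟨j, hj, hK'j⟩ := hK'
    exact hcross a (Finset.mem_insert_self a s) j (Finset.mem_insert_of_mem hj)
      (fun haj => ha (haj ▸ hj)) K hK K' hK'j

theorem sum_Mloc_le_variationOn {Y : Set (ι → ℝ)} (s : Finset ℕ) (F : ℕ → Finset (Brick ι))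
    (hcross : ∀ i ∈ s, ∀ j ∈ s, i ≠ j → ∀ K ∈ F i, ∀ K' ∈ F j, K.inter ∩ K'.inter = ∅) :
    ∑ i ∈ s, Mloc I h Y (F i) ≤ variationOn I h Y := by
  rw [variationOn_eq]
  refine le_iInf₂ fun δ hδ => ?_
  have h1 : ∑ i ∈ s, Mloc I h Y (F i) ≤ ∑ i ∈ s, Ploc I h δ Y (F i) :=
    Finset.sum_le_sum fun i _ => iInf₂_le δ hδ
  exact le_trans h1 (le_trans (sum_Ploc_le s F hcross) (Ploc_le_Wfun hδ Y _))
/-! ### Orthant splitting -/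

/-- the possible coordinate intervals when splitting `J` at the point `x` -/
noncomputable def opts (J : Brick ι) (x : ι → ℝ) (c : ι) : Finset (ℝ × ℝ) :=
  if J.lower c < x c ∧ x c < J.upper c then {(J.lower c, x c), (x c, J.upper c)}
  else {(J.lower c, J.upper c)}

theorem opts_spec {J : Brick ι} {x : ι → ℝ} (hx : x ∈ J.toSet) {c : ι} {q : ℝ × ℝ}
    (hq : q ∈ opts J x c) :
    q.1 < q.2 ∧ J.lower c ≤ q.1 ∧ q.2 ≤ J.upper c ∧ q.1 ≤ x c ∧ x c ≤ q.2 ∧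
      (q.1 = x c ∨ q.2 = x c) := by
  have hxc := Brick.mem_toSet.1 hx c
  have hlt := J.lt c
  rw [opts] at hq
  split_ifs at hq with hc
  · rcases Finset.mem_insert.1 hq with rfl | hq
    · exact ⟨hc.1, le_rfl, hc.2.le, hc.1.le, le_rfl, Or.inr rfl⟩
    · rw [Finset.mem_singleton] at hq
      subst hq
      exact ⟨hc.2, hc.1.le, le_rfl, le_rfl, hc.2.le, Or.inl rfl⟩
  · rw [Finset.mem_singleton] at hq
    subst hq
    rcases not_and_or.1 hc with hc' | hc'
    · have : x c = J.lower c := le_antisymm (not_lt.1 hc') hxc.1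
      exact ⟨hlt, le_rfl, le_rfl, hxc.1, hxc.2, Or.inl this.symm⟩
    · have : x c = J.upper c := le_antisymm hxc.2 (not_lt.1 hc')
      exact ⟨hlt, le_rfl, le_rfl, hxc.1, hxc.2, Or.inr this.symm⟩

/-- build a brick from coordinate intervals -/
noncomputable def mkB (J : Brick ι) (f : ι → ℝ × ℝ) : Brick ι :=
  if hf : ∀ c, (f c).1 < (f c).2 then ⟨fun c => (f c).1, fun c => (f c).2, hf⟩ else J

/-- the orthant sub-bricks of `J` at `x` -/
noncomputable def orth (J : Brick ι) (x : ι → ℝ) : Finset (Brick ι) :=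
  (Fintype.piFinset (opts J x)).image (mkB J)

theorem orth_spec {J : Brick ι} {x : ι → ℝ} (hx : x ∈ J.toSet) {Q : Brick ι}
    (hQ : Q ∈ orth J x) : ∀ c, (Q.lower c, Q.upper c) ∈ opts J x c := by
  obtain ⟨f, hf, rfl⟩ := Finset.mem_image.1 hQ
  rw [Fintype.mem_piFinset] at hf
  have hflt : ∀ c, (f c).1 < (f c).2 := fun c => (opts_spec hx (hf c)).1
  intro c
  rw [mkB, dif_pos hflt]
  exact hf c

theorem orth_subset {J : Brick ι} {x : ι → ℝ} (hx : x ∈ J.toSet) {Q : Brick ι}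
    (hQ : Q ∈ orth J x) : Q.toSet ⊆ J.toSet := by
  intro y hy c
  have hs := opts_spec hx (orth_spec hx hQ c)
  have hyc := Brick.mem_toSet.1 hy c
  exact ⟨le_trans hs.2.1 hyc.1, le_trans hyc.2 hs.2.2.1⟩

theorem mem_orth_self {J : Brick ι} {x : ι → ℝ} (hx : x ∈ J.toSet) {Q : Brick ι}
    (hQ : Q ∈ orth J x) : x ∈ Q.toSet := by
  intro c
  have hs := opts_spec hx (orth_spec hx hQ c)
  exact ⟨hs.2.2.2.1, hs.2.2.2.2.1⟩

theorem orth_nonoverlap {J : Brick ι} {x : ι → ℝ} (hx : x ∈ J.toSet) {Q Q' : Brick ι}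
    (hQ : Q ∈ orth J x) (hQ' : Q' ∈ orth J x) (hne : Q ≠ Q') :
    Q.inter ∩ Q'.inter = ∅ := by
  have hcne : ∃ c, (Q.lower c, Q.upper c) ≠ (Q'.lower c, Q'.upper c) := by
    by_contra hc
    push_neg at hc
    apply hne
    cases Q; cases Q'
    simp only [Brick.mk.injEq]
    constructor <;> [skip; skip] <;>
      · funext c
        have := hc c
        simp only [Prod.mk.injEq] at this
        tauto
  obtain ⟨c, hc⟩ := hcne
  have h1 := orth_spec hx hQ c
  have h2 := orth_spec hx hQ' c
  rw [opts] at h1 h2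
  rw [Set.eq_empty_iff_forall_notMem]
  intro y hy
  have hy1 := Brick.mem_inter.1 hy.1 c
  have hy2 := Brick.mem_inter.1 hy.2 c
  split_ifs at h1 h2 with hcc
  · rcases Finset.mem_insert.1 h1 with e1 | e1
    · rcases Finset.mem_insert.1 h2 with e2 | e2
      · exact hc (e1.trans e2.symm)
      · rw [Finset.mem_singleton] at e2
        have b1 : Q.upper c = x c := congrArg Prod.snd e1
        have a2 : Q'.lower c = x c := congrArg Prod.fst e2
        rw [b1] at hy1; rw [a2] at hy2
        linarith [hy1.2, hy2.1]
    · rw [Finset.mem_singleton] at e1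
      rcases Finset.mem_insert.1 h2 with e2 | e2
      · have a1 : Q.lower c = x c := congrArg Prod.fst e1
        have b2 : Q'.upper c = x c := congrArg Prod.snd e2
        rw [a1] at hy1; rw [b2] at hy2
        linarith [hy1.1, hy2.2]
      · rw [Finset.mem_singleton] at e2
        exact hc (e1.trans e2.symm)
  · rw [Finset.mem_singleton] at h1 h2
    exact hc (h1.trans h2.symm)

theorem orth_cover {J : Brick ι} {x : ι → ℝ} (hx : x ∈ J.toSet) {y : ι → ℝ}
    (hy : y ∈ J.toSet) : ∃ Q ∈ orth J x, y ∈ Q.toSet := by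
  classical
  set f : ι → ℝ × ℝ := fun c =>
    if J.lower c < x c ∧ x c < J.upper c then
      (if y c ≤ x c then (J.lower c, x c) else (x c, J.upper c))
    else (J.lower c, J.upper c) with hf
  have hfmem : f ∈ Fintype.piFinset (opts J x) := by
    rw [Fintype.mem_piFinset]
    intro c
    simp only [hf, opts]
    split_ifs with h1 h2
    · exact Finset.mem_insert_self _ _
    · exact Finset.mem_insert_of_mem (Finset.mem_singleton_self _)
    · exact Finset.mem_singleton_self _
  have hflt : ∀ c, (f c).1 < (f c).2 := by
    intro c
    simp only [hf]
    split_ifs with h1 h2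
    · exact h1.1
    · exact h1.2
    · exact J.lt c
  refine ⟨mkB J f, Finset.mem_image_of_mem _ hfmem, ?_⟩
  rw [Brick.mem_toSet]
  intro c
  rw [mkB, dif_pos hflt]
  have hyc := Brick.mem_toSet.1 hy c
  simp only [hf]
  split_ifs with h1 h2
  · exact ⟨hyc.1, h2⟩
  · exact ⟨(not_le.1 h2).le, hyc.2⟩
  · exact hyc
/-! ### The face gauge and classification -/

theorem coord_lt_of_ball {J : Brick ι} {x : ι → ℝ} {r : ℝ}
    (h : J.toSet ⊆ Metric.ball x r) {y : ι → ℝ} (hy : y ∈ J.toSet) (c : ι) :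
    |y c - x c| < r := by
  have h1 : dist y x < r := Metric.mem_ball.1 (h hy)
  have h2 : dist (y c) (x c) ≤ dist y x := dist_le_pi_dist y x c
  rw [Real.dist_eq] at h2
  linarith

/-- the distances from `x` to the faces of the bricks of `C` -/
noncomputable def faceSet (C : Finset (Brick ι)) (x : ι → ℝ) : Finset ℝ :=
  (C.biUnion fun K => Finset.univ.biUnion fun c =>
      {|x c - K.lower c|, |x c - K.upper c|}).filter (fun r => 0 < r)

/-- a gauge finer than `β` and than all positive face distances -/
noncomputable def faceGauge (C : Finset (Brick ι)) (β : (ι → ℝ) → ℝ) (x : ι → ℝ) : ℝ :=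
  if hs : (faceSet C x).Nonempty then min (β x) ((faceSet C x).min' hs / 3) else β x

theorem faceGauge_le (C : Finset (Brick ι)) (β : (ι → ℝ) → ℝ) (x : ι → ℝ) :
    faceGauge C β x ≤ β x := by
  rw [faceGauge]
  split_ifs with hs
  · exact min_le_left _ _
  · exact le_rfl

theorem faceGauge_gauge {I : Brick ι} {C : Finset (Brick ι)} {β : (ι → ℝ) → ℝ}
    (hβ : IsGauge I β) : IsGauge I (faceGauge C β) := by
  intro x hx
  rw [faceGauge]
  split_ifs with hs
  · refine lt_min (hβ x hx) ?_
    have h1 : 0 < (faceSet C x).min' hs := (Finset.mem_filter.1 ((faceSet C x).min'_mem hs)).2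
    linarith
  · exact hβ x hx

theorem mem_faceSet_lower {C : Finset (Brick ι)} {K : Brick ι} (hK : K ∈ C) {x : ι → ℝ}
    {c : ι} (h : x c ≠ K.lower c) : |x c - K.lower c| ∈ faceSet C x := by
  rw [show faceSet C x = (C.biUnion fun K => Finset.univ.biUnion fun c =>
      {|x c - K.lower c|, |x c - K.upper c|}).filter (fun r => 0 < r) from rfl, Finset.mem_filter]
  refine ⟨Finset.mem_biUnion.2 ⟨K, hK, Finset.mem_biUnion.2 ⟨c, Finset.mem_univ c, ?_⟩⟩, ?_⟩
  · exact Finset.mem_insert_self _ _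
  · exact abs_pos.2 (sub_ne_zero.2 h)

theorem mem_faceSet_upper {C : Finset (Brick ι)} {K : Brick ι} (hK : K ∈ C) {x : ι → ℝ}
    {c : ι} (h : x c ≠ K.upper c) : |x c - K.upper c| ∈ faceSet C x := by
  rw [show faceSet C x = (C.biUnion fun K => Finset.univ.biUnion fun c =>
      {|x c - K.lower c|, |x c - K.upper c|}).filter (fun r => 0 < r) from rfl, Finset.mem_filter]
  refine ⟨Finset.mem_biUnion.2 ⟨K, hK, Finset.mem_biUnion.2 ⟨c, Finset.mem_univ c, ?_⟩⟩, ?_⟩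
  · exact Finset.mem_insert_of_mem (Finset.mem_singleton_self _)
  · exact abs_pos.2 (sub_ne_zero.2 h)

theorem two_faceGauge_le {C : Finset (Brick ι)} {β : (ι → ℝ) → ℝ} {x : ι → ℝ} {d : ℝ}
    (hd : d ∈ faceSet C x) : 2 * faceGauge C β x ≤ d := by
  have hs : (faceSet C x).Nonempty := ⟨d, hd⟩
  have h1 : (faceSet C x).min' hs ≤ d := Finset.min'_le _ _ hd
  have h2 : faceGauge C β x ≤ (faceSet C x).min' hs / 3 := by
    rw [faceGauge, dif_pos hs]; exact min_le_right _ _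
  have h3 : 0 < d := (Finset.mem_filter.1 hd).2
  linarith

/-- the key classification: orthant pieces of a fine piece lie inside single bricks of `C` -/
theorem orth_in_fam {I : Brick ι} {C : Finset (Brick ι)}
    (hCcov : I.toSet ⊆ ⋃ K ∈ C, K.toSet) {β : (ι → ℝ) → ℝ} {J : Brick ι} {x : ι → ℝ}
    (hx : x ∈ J.toSet) (hJI : J.toSet ⊆ I.toSet)
    (hfine : J.toSet ⊆ Metric.ball x (faceGauge C β x))
    {Q : Brick ι} (hQ : Q ∈ orth J x) : ∃ K ∈ C, Q.toSet ⊆ K.toSet := by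
  set σ := faceGauge C β x with hσ
  have hpos : 0 < σ := by
    have h0 := hfine hx
    rwa [Metric.mem_ball, dist_self] at h0
  have hmidJ : Q.mid ∈ J.toSet := orth_subset hx hQ Q.mid_mem_toSet
  obtain ⟨K, hK, hmK⟩ := Set.mem_iUnion₂.1 (hCcov (hJI hmidJ))
  -- x belongs to K
  have hxK : x ∈ K.toSet := by
    rw [Brick.mem_toSet]
    intro c
    have hmKc := Brick.mem_toSet.1 hmK c
    have hmd : |Q.mid c - x c| < σ := coord_lt_of_ball hfine hmidJ c
    constructor
    · by_contra hlt
      push_neg at hlt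
      have hne : x c ≠ K.lower c := ne_of_lt hlt
      have h2 : 2 * σ ≤ |x c - K.lower c| := two_faceGauge_le (mem_faceSet_lower hK hne)
      rw [abs_of_neg (by linarith)] at h2
      have := abs_lt.1 hmd
      linarith [hmKc.1]
    · by_contra hlt
      push_neg at hlt
      have hne : x c ≠ K.upper c := ne_of_gt hlt
      have h2 : 2 * σ ≤ |x c - K.upper c| := two_faceGauge_le (mem_faceSet_upper hK hne)
      rw [abs_of_pos (by linarith)] at h2
      have := abs_lt.1 hmd
      linarith [hmKc.2]
  refine ⟨K, hK, ?_⟩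
  -- coordinatewise inclusion
  have hco : ∀ c, K.lower c ≤ Q.lower c ∧ Q.upper c ≤ K.upper c := by
    intro c
    have hs := opts_spec hx (orth_spec hx hQ c)
    have hxKc := Brick.mem_toSet.1 hxK c
    have hmKc := Brick.mem_toSet.1 hmK c
    have hmidc : Q.mid c = (Q.lower c + Q.upper c) / 2 := rfl
    have hJu : |J.upper c - x c| < σ := coord_lt_of_ball hfine J.upper_mem_toSet c
    have hJl : |J.lower c - x c| < σ := coord_lt_of_ball hfine J.lower_mem_toSet c
    constructor
    · -- K.lower c ≤ Q.lower c
      by_contra hKb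
      push_neg at hKb
      by_cases hax : Q.lower c = x c
      · rw [hax] at hKb
        linarith [hxKc.1]
      · have hbx : Q.upper c = x c := hs.2.2.2.2.2.resolve_left hax
        have halt : Q.lower c < x c := lt_of_le_of_ne hs.2.2.2.1 hax
        by_cases hKx : K.lower c = x c
        · rw [hmidc, hbx] at hmKc
          rw [hKx] at hmKc
          linarith [hmKc.1]
        · have hne : x c ≠ K.lower c := fun hh => hKx hh.symm
          have h2 : 2 * σ ≤ |x c - K.lower c| := two_faceGauge_le (mem_faceSet_lower hK hne)
          have hKlt : K.lower c < x c := lt_of_le_of_ne hxKc.1 hKx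
          rw [abs_of_pos (by linarith)] at h2
          have h3 := abs_lt.1 hJl
          linarith [hs.2.1]
    · -- Q.upper c ≤ K.upper c
      by_contra hKb
      push_neg at hKb
      by_cases hbx : Q.upper c = x c
      · rw [hbx] at hKb
        linarith [hxKc.2]
      · have hax : Q.lower c = x c := hs.2.2.2.2.2.resolve_right hbx
        have hblt : x c < Q.upper c := lt_of_le_of_ne hs.2.2.2.2.1 (fun hh => hbx hh.symm)
        by_cases hKx : K.upper c = x c
        · rw [hmidc, hax] at hmKc
          rw [hKx] at hmKc
          linarith [hmKc.2]
        · have hne : x c ≠ K.upper c := fun hh => hKx hh.symm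
          have h2 : 2 * σ ≤ |x c - K.upper c| := two_faceGauge_le (mem_faceSet_upper hK hne)
          have hKlt : x c < K.upper c := lt_of_le_of_ne hxKc.2 hne
          rw [abs_of_neg (by linarith)] at h2
          have h3 := abs_lt.1 hJu
          linarith [hs.2.2.1]
  intro y hy c
  have hyc := Brick.mem_toSet.1 hy c
  exact ⟨le_trans (hco c).1 hyc.1, le_trans hyc.2 (hco c).2⟩
/-! ### The splitting theorem -/

/-- the orthant division of `J` at `x`, as a `TaggedDiv` -/
noncomputable def orthDiv (J : Brick ι) (x : ι → ℝ) (hx : x ∈ J.toSet) : TaggedDiv J where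
  pieces := (orth J x).image (fun Q => (Q, x))
  subset_of_mem := by
    intro p hp
    obtain ⟨Q, hQ, rfl⟩ := Finset.mem_image.1 hp
    exact orth_subset hx hQ
  tag_mem := by
    intro p hp
    obtain ⟨Q, hQ, rfl⟩ := Finset.mem_image.1 hp
    exact mem_orth_self hx hQ
  nonoverlap := by
    intro p hp q hq hne
    obtain ⟨Q, hQ, rfl⟩ := Finset.mem_image.1 hp
    obtain ⟨Q', hQ', rfl⟩ := Finset.mem_image.1 hq
    exact orth_nonoverlap hx hQ hQ' (fun hh => hne (Prod.ext hh rfl))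
  cover := by
    apply subset_antisymm
    · intro y hy
      obtain ⟨Q, hQ, hyQ⟩ := orth_cover hx hy
      exact Set.mem_biUnion (Finset.mem_image_of_mem _ hQ) hyQ
    · apply Set.iUnion₂_subset
      intro p hp
      obtain ⟨Q, hQ, rfl⟩ := Finset.mem_image.1 hp
      exact orth_subset hx hQ

theorem abs_h_le_orth {h : Brick ι → (ι → ℝ) → ℝ}
    (hadd : ∀ (P : ι → ℝ) (K : Brick ι) (D : TaggedDiv K),
      (∑ p ∈ D.pieces, h p.1 P) = h K P)
    {J : Brick ι} {x : ι → ℝ} (hx : x ∈ J.toSet) :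
    |h J x| ≤ ∑ Q ∈ orth J x, |h Q x| := by
  have h1 := hadd x J (orthDiv J x hx)
  have h2 : (orthDiv J x hx).pieces = (orth J x).image (fun Q => (Q, x)) := rfl
  rw [h2, Finset.sum_image (fun a _ b _ hab => congrArg Prod.fst hab)] at h1
  calc |h J x| = |∑ Q ∈ orth J x, h Q x| := by rw [h1]
    _ ≤ ∑ Q ∈ orth J x, |h Q x| := Finset.abs_sum_le_sum_abs _ _

/-- The splitting theorem: a partial division fine w.r.t. the face gauge of a covering family
`C` splits, in variation, into a part localized in `F` and a part localized in `C \ F`. -/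
theorem split_bound {I : Brick ι} {h : Brick ι → (ι → ℝ) → ℝ}
    (hadd : ∀ (P : ι → ℝ) (K : Brick ι) (D : TaggedDiv K),
      (∑ p ∈ D.pieces, h p.1 P) = h K P)
    {C F : Finset (Brick ι)} (hFC : F ⊆ C)
    (hCcov : I.toSet ⊆ ⋃ K ∈ C, K.toSet) {β : (ι → ℝ) → ℝ} {Y : Set (ι → ℝ)}
    {π : Finset (Brick ι × (ι → ℝ))} (hπ : Pdiv I π) (hfine : Fine (faceGauge C β) π)
    (htag : TagIn Y π) :
    ENNReal.ofReal (psum h π) ≤ Ploc I h β Y F + Ploc I h (faceGauge C β) Y (C \ F) := by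
  classical
  -- the two sides
  set φ : Brick ι × (ι → ℝ) → Finset (Brick ι × (ι → ℝ)) := fun p =>
    ((orth p.1 p.2).filter (fun Q => ∃ K ∈ F, Q.toSet ⊆ K.toSet)).image (fun Q => (Q, p.2))
    with hφ
  set ψ : Brick ι × (ι → ℝ) → Finset (Brick ι × (ι → ℝ)) := fun p =>
    ((orth p.1 p.2).filter (fun Q => ¬∃ K ∈ F, Q.toSet ⊆ K.toSet)).image (fun Q => (Q, p.2))
    with hψ
  -- membership facts
  have hφmem : ∀ p ∈ π, ∀ q ∈ φ p, q.2 = p.2 ∧ q.1 ∈ orth p.1 p.2 ∧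
      ∃ K ∈ F, q.1.toSet ⊆ K.toSet := by
    intro p hp q hq
    rw [hφ] at hq
    obtain ⟨Q, hQ, rfl⟩ := Finset.mem_image.1 hq
    have := Finset.mem_filter.1 hQ
    exact ⟨rfl, this.1, this.2⟩
  have hψmem : ∀ p ∈ π, ∀ q ∈ ψ p, q.2 = p.2 ∧ q.1 ∈ orth p.1 p.2 ∧
      ∃ K ∈ C \ F, q.1.toSet ⊆ K.toSet := by
    intro p hp q hq
    rw [hψ] at hq
    obtain ⟨Q, hQ, rfl⟩ := Finset.mem_image.1 hq
    have h1 := Finset.mem_filter.1 hQ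
    obtain ⟨K, hK, hQK⟩ := orth_in_fam hCcov (hπ.2.1 p hp) (hπ.1 p hp) (hfine p hp) h1.1
    refine ⟨rfl, h1.1, K, Finset.mem_sdiff.2 ⟨hK, ?_⟩, hQK⟩
    intro hKF
    exact h1.2 ⟨K, hKF, hQK⟩
  -- generic: sub-pieces of distinct pieces are distinct & non-overlapping
  have hkey : ∀ g : Brick ι × (ι → ℝ) → Finset (Brick ι × (ι → ℝ)),
      (∀ p ∈ π, ∀ q ∈ g p, q.2 = p.2 ∧ q.1 ∈ orth p.1 p.2) →
      ((π : Set (Brick ι × (ι → ℝ))).PairwiseDisjoint g ∧ Pdiv I (π.biUnion g) ∧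
        Fine (faceGauge C β) (π.biUnion g) ∧ TagIn Y (π.biUnion g)) := by
    intro g hg
    have hsub : ∀ p ∈ π, ∀ q ∈ g p, q.1.toSet ⊆ p.1.toSet := by
      intro p hp q hq
      exact orth_subset (hπ.2.1 p hp) (hg p hp q hq).2
    have hdisj : (π : Set (Brick ι × (ι → ℝ))).PairwiseDisjoint g := by
      intro p hp p' hp' hne
      simp only [Function.onFun]
      rw [Finset.disjoint_left]
      intro q hq hq'
      have h1 := hsub p hp q hq
      have h2 := hsub p' hp' q hq'
      have h3 := Brick.nonoverlap_of_subset h1 h2 (hπ.2.2 p hp p' hp' hne)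
      rw [Set.inter_self] at h3
      exact q.1.ne_empty_inter h3
    refine ⟨hdisj, ⟨?_, ?_, ?_⟩, ?_, ?_⟩
    · intro q hq
      obtain ⟨p, hp, hqp⟩ := Finset.mem_biUnion.1 hq
      exact subset_trans (hsub p hp q hqp) (hπ.1 p hp)
    · intro q hq
      obtain ⟨p, hp, hqp⟩ := Finset.mem_biUnion.1 hq
      have := mem_orth_self (hπ.2.1 p hp) (hg p hp q hqp).2
      rw [(hg p hp q hqp).1]
      exact this
    · intro q hq q' hq' hne
      obtain ⟨p, hp, hqp⟩ := Finset.mem_biUnion.1 hq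
      obtain ⟨p', hp', hqp'⟩ := Finset.mem_biUnion.1 hq'
      by_cases hpp : p = p'
      · subst hpp
        have e1 := (hg p hp q hqp).1
        have e2 := (hg p hp q' hqp').1
        have hQne : q.1 ≠ q'.1 := by
          intro hh
          apply hne
          apply Prod.ext hh (e1.trans e2.symm)
        exact orth_nonoverlap (hπ.2.1 p hp) (hg p hp q hqp).2 (hg p hp q' hqp').2 hQne
      · exact Brick.nonoverlap_of_subset (hsub p hp q hqp) (hsub p' hp' q' hqp')
          (hπ.2.2 p hp p' hp' hpp)
    · intro q hq
      obtain ⟨p, hp, hqp⟩ := Finset.mem_biUnion.1 hq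
      rw [(hg p hp q hqp).1]
      exact subset_trans (hsub p hp q hqp) (hfine p hp)
    · intro q hq
      obtain ⟨p, hp, hqp⟩ := Finset.mem_biUnion.1 hq
      rw [(hg p hp q hqp).1]
      exact htag p hp
  obtain ⟨hφdisj, hφpdiv, hφfine, hφtag⟩ :=
    hkey φ (fun p hp q hq => ⟨(hφmem p hp q hq).1, (hφmem p hp q hq).2.1⟩)
  obtain ⟨hψdisj, hψpdiv, hψfine, hψtag⟩ :=
    hkey ψ (fun p hp q hq => ⟨(hψmem p hp q hq).1, (hψmem p hp q hq).2.1⟩)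
  -- the sum inequality
  have hsum : psum h π ≤ psum h (π.biUnion φ) + psum h (π.biUnion ψ) := by
    rw [psum, psum, psum, Finset.sum_biUnion hφdisj, Finset.sum_biUnion hψdisj,
      ← Finset.sum_add_distrib]
    refine Finset.sum_le_sum fun p hp => ?_
    have hinj : ∀ s : Finset (Brick ι),
        ∑ q ∈ s.image (fun Q => (Q, p.2)), |h q.1 q.2| = ∑ Q ∈ s, |h Q p.2| :=
      fun s => Finset.sum_image (fun a _ b _ hab => congrArg Prod.fst hab)
    rw [hφ, hψ, hinj, hinj]
    rw [Finset.sum_filter_add_sum_filter_not]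
    exact abs_h_le_orth hadd (hπ.2.1 p hp)
  -- conclude
  have hleft : ENNReal.ofReal (psum h (π.biUnion φ)) ≤ Ploc I h β Y F := by
    refine le_iSup_of_le ⟨π.biUnion φ, hφpdiv, ?_, hφtag, ?_⟩ le_rfl
    · intro q hq
      refine subset_trans (hφfine q hq) (Metric.ball_subset_ball ?_)
      exact faceGauge_le C β q.2
    · intro q hq
      obtain ⟨p, hp, hqp⟩ := Finset.mem_biUnion.1 hq
      exact (hφmem p hp q hqp).2.2
  have hright : ENNReal.ofReal (psum h (π.biUnion ψ)) ≤ Ploc I h (faceGauge C β) Y (C \ F) := by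
    refine le_iSup_of_le ⟨π.biUnion ψ, hψpdiv, hψfine, hψtag, ?_⟩ le_rfl
    intro q hq
    obtain ⟨p, hp, hqp⟩ := Finset.mem_biUnion.1 hq
    exact (hψmem p hp q hqp).2.2
  calc ENNReal.ofReal (psum h π)
      ≤ ENNReal.ofReal (psum h (π.biUnion φ) + psum h (π.biUnion ψ)) :=
        ENNReal.ofReal_le_ofReal hsum
    _ = ENNReal.ofReal (psum h (π.biUnion φ)) + ENNReal.ofReal (psum h (π.biUnion ψ)) :=
        ENNReal.ofReal_add (psum_nonneg _ _) (psum_nonneg _ _)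
    _ ≤ _ := add_le_add hleft hright
/-! ### Additivity of the volume -/

theorem brick_volume (J : Brick ι) : MeasureTheory.volume J.toSet = ENNReal.ofReal J.vol := by
  rw [Brick.toSet_eq, Real.volume_Icc_pi, Brick.vol,
    ENNReal.ofReal_prod_of_nonneg (fun c _ => sub_nonneg.2 (J.lt c).le)]

theorem volume_inter_eq_zero {J K : Brick ι} (h : J.inter ∩ K.inter = ∅) :
    MeasureTheory.volume (J.toSet ∩ K.toSet) = 0 := by
  rw [Brick.toSet_eq, Brick.toSet_eq, Set.Icc_inter_Icc, Real.volume_Icc_pi]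
  have hc : ∃ c, (J.upper ⊓ K.upper) c ≤ (J.lower ⊔ K.lower) c := by
    by_contra hcon
    push_neg at hcon
    set m : ι → ℝ := fun c => ((J.lower ⊔ K.lower) c + (J.upper ⊓ K.upper) c) / 2 with hm
    have hmJ : m ∈ J.inter := by
      intro c
      have h1 := hcon c
      have h2 : J.lower c ≤ (J.lower ⊔ K.lower) c := le_sup_left
      have h3 : (J.upper ⊓ K.upper) c ≤ J.upper c := inf_le_left
      constructor
      · show J.lower c < ((J.lower ⊔ K.lower) c + (J.upper ⊓ K.upper) c) / 2; linarith
      · show ((J.lower ⊔ K.lower) c + (J.upper ⊓ K.upper) c) / 2 < J.upper c; linarith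
    have hmK : m ∈ K.inter := by
      intro c
      have h1 := hcon c
      have h2 : K.lower c ≤ (J.lower ⊔ K.lower) c := le_sup_right
      have h3 : (J.upper ⊓ K.upper) c ≤ K.upper c := inf_le_right
      constructor
      · show K.lower c < ((J.lower ⊔ K.lower) c + (J.upper ⊓ K.upper) c) / 2; linarith
      · show ((J.lower ⊔ K.lower) c + (J.upper ⊓ K.upper) c) / 2 < K.upper c; linarith
    exact (Set.eq_empty_iff_forall_notMem.1 h) m ⟨hmJ, hmK⟩
  obtain ⟨c, hc⟩ := hc
  apply Finset.prod_eq_zero (Finset.mem_univ c)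
  rw [ENNReal.ofReal_eq_zero]
  linarith

/-- additivity of the volume over tagged divisions -/
theorem vol_hadd : ∀ (_ : ι → ℝ) (K : Brick ι) (D : TaggedDiv K),
    (∑ p ∈ D.pieces, (p.1 : Brick ι).vol) = K.vol := by
  intro _ K D
  have h1 : MeasureTheory.volume K.toSet =
      ∑ p ∈ D.pieces, MeasureTheory.volume (p.1 : Brick ι).toSet := by
    rw [D.cover]
    apply MeasureTheory.measure_biUnion_finset₀
    · intro p hp q hq hne
      show MeasureTheory.volume ((p.1 : Brick ι).toSet ∩ (q.1 : Brick ι).toSet) = 0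
      exact volume_inter_eq_zero (D.nonoverlap p hp q hq hne)
    · intro p _
      rw [Brick.toSet_eq]
      exact measurableSet_Icc.nullMeasurableSet
  rw [brick_volume] at h1
  have h2 : ∀ p ∈ D.pieces, MeasureTheory.volume (p.1 : Brick ι).toSet =
      ENNReal.ofReal (p.1 : Brick ι).vol := fun p _ => brick_volume p.1
  rw [Finset.sum_congr rfl h2, ← ENNReal.ofReal_sum_of_nonneg
    (fun p _ => (p.1 : Brick ι).vol_nonneg)] at h1
  exact ((ENNReal.ofReal_eq_ofReal_iff K.vol_nonneg
    (Finset.sum_nonneg fun p _ => (p.1 : Brick ι).vol_nonneg)).1 h1).symm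
/-! ### The main theorem -/

theorem varSum_restr_mono {I : Brick ι} {h : Brick ι → (ι → ℝ) → ℝ} {Y Y' : Set (ι → ℝ)}
    (hYY : Y ⊆ Y') (D : TaggedDiv I) : varSum (restr h Y) D ≤ varSum (restr h Y') D := by
  refine Finset.sum_le_sum fun p _ => ?_
  by_cases hp : p.2 ∈ Y
  · rw [restr, restr, if_pos hp, if_pos (hYY hp)]
  · rw [restr, if_neg hp, abs_zero]
    exact abs_nonneg _

theorem variationOn_mono {I : Brick ι} {h : Brick ι → (ι → ℝ) → ℝ} {Y Y' : Set (ι → ℝ)}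
    (hYY : Y ⊆ Y') : variationOn I h Y ≤ variationOn I h Y' := by
  rw [variationOn_eq, variationOn_eq]
  refine iInf_mono fun δ => iInf_mono fun _ => iSup_mono fun D => iSup_mono fun _ => ?_
  exact ENNReal.ofReal_le_ofReal (varSum_restr_mono hYY D)

theorem pdiv_of_subset {I : Brick ι} {D : TaggedDiv I} {π : Finset (Brick ι × (ι → ℝ))}
    (hsub : π ⊆ D.pieces) : Pdiv I π :=
  ⟨fun p hp => D.subset_of_mem p (hsub hp), fun p hp => D.tag_mem p (hsub hp),
    fun p hp q hq hne => D.nonoverlap p (hsub hp) q (hsub hq) hne⟩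

theorem variationOn_iUnion (I : Brick ι) (h : Brick ι → (ι → ℝ) → ℝ)
    (hadd : ∀ (P : ι → ℝ) (K : Brick ι) (D : TaggedDiv K),
      (∑ p ∈ D.pieces, h p.1 P) = h K P)
    (X : ℕ → Set (ι → ℝ)) (hmono : Monotone X) :
    variationOn I h (⋃ j, X j) = ⨆ j, variationOn I h (X j) := by
  classical
  apply le_antisymm
  swap
  · exact iSup_le fun j => variationOn_mono (Set.subset_iUnion X j)
  set S := ⨆ j, variationOn I h (X j) with hSdef
  refine ENNReal.le_of_forall_pos_le_add fun ε hε hS => ?_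
  have hStop : S ≠ ⊤ := hS.ne
  have hVle : ∀ i, variationOn I h (X i) ≤ S := fun i => le_iSup (fun j => variationOn I h (X j)) i
  -- the epsilons
  set e : ℕ → ℝ≥0∞ := fun i => (ε : ℝ≥0∞) / 2 * (1 / 2) ^ i with he
  have he0 : ∀ i, e i ≠ 0 := by
    intro i
    simp only [he]
    refine mul_ne_zero ?_ ?_
    · exact ENNReal.div_ne_zero.2 ⟨by exact_mod_cast hε.ne', ENNReal.ofNat_ne_top⟩
    · exact pow_ne_zero i (by norm_num)
  have hetop : ∀ i, e i ≠ ⊤ := by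
    intro i
    simp only [he]
    exact ENNReal.mul_ne_top (ENNReal.div_lt_top ENNReal.coe_ne_top (by norm_num)).ne
      (ENNReal.pow_ne_top (by norm_num))
  have hesum : ∀ s : Finset ℕ, ∑ i ∈ s, e i ≤ (ε : ℝ≥0∞) := by
    intro s
    calc ∑ i ∈ s, e i ≤ ∑' i, e i := ENNReal.sum_le_tsum s
      _ = (ε : ℝ≥0∞) / 2 * ∑' i : ℕ, (1 / 2 : ℝ≥0∞) ^ i := ENNReal.tsum_mul_left
      _ = (ε : ℝ≥0∞) / 2 * 2 := by
          rw [ENNReal.tsum_geometric, one_div, ENNReal.one_sub_inv_two, inv_inv]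
      _ = ε := ENNReal.div_mul_cancel (by norm_num) (by norm_num)
  -- choice of good gauges
  have hex : ∀ i : ℕ, ∃ δ, IsGauge I δ ∧
      Wfun I h (X i) δ ≤ variationOn I h (X i) + e i := by
    intro i
    have h1 : variationOn I h (X i) < variationOn I h (X i) + e i :=
      ENNReal.lt_add_right (lt_of_le_of_lt (hVle i) hS).ne (he0 i)
    rw [variationOn_eq] at h1
    obtain ⟨δ, hδ⟩ := iInf_lt_iff.1 h1
    obtain ⟨hg, hlt⟩ := iInf_lt_iff.1 hδ
    exact ⟨δ, hg, hlt.le⟩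
  choose δ hδg hδW using hex
  -- the diagonal gauge
  set Δ : (ι → ℝ) → ℝ := fun x =>
    if hx : x ∈ ⋃ j, X j then δ (Nat.find (Set.mem_iUnion.1 hx)) x else 1 with hΔ
  have hΔg : IsGauge I Δ := by
    intro x hx
    simp only [hΔ]
    split_ifs with hxu
    · exact hδg _ x hx
    · exact one_pos
  rw [variationOn_eq]
  refine le_trans (iInf₂_le Δ hΔg) (iSup₂_le fun D hD => ?_)
  rw [varSum_restr_eq_psum]
  set T := D.pieces.filter (fun p => p.2 ∈ ⋃ j, X j) with hT
  set idx : Brick ι × (ι → ℝ) → ℕ := fun p =>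
    if hp : p.2 ∈ ⋃ j, X j then Nat.find (Set.mem_iUnion.1 hp) else 0 with hidx
  have hidxmem : ∀ p ∈ T, p.2 ∈ X (idx p) := by
    intro p hp
    have hp2 : p.2 ∈ ⋃ j, X j := (Finset.mem_filter.1 hp).2
    simp only [hidx, dif_pos hp2]
    exact Nat.find_spec (Set.mem_iUnion.1 hp2)
  have hΔeq : ∀ p ∈ T, Δ p.2 = δ (idx p) p.2 := by
    intro p hp
    have hp2 : p.2 ∈ ⋃ j, X j := (Finset.mem_filter.1 hp).2
    simp only [hΔ, hidx, dif_pos hp2]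
  rcases Finset.eq_empty_or_nonempty T with hTe | hTne
  · rw [hTe]
    rw [show psum h (∅ : Finset (Brick ι × (ι → ℝ))) = 0 from Finset.sum_empty]
    simp
  have hIm : (T.image idx).Nonempty := hTne.image idx
  set N := (T.image idx).max' hIm with hN
  set π : ℕ → Finset (Brick ι × (ι → ℝ)) := fun i => T.filter (fun p => idx p = i) with hπ
  set Fm : ℕ → Finset (Brick ι) := fun i => (π i).image Prod.fst with hFm
  have hπsub : ∀ i, (π i : Finset (Brick ι × (ι → ℝ))) ⊆ D.pieces := by
    intro i p hp
    exact (Finset.mem_filter.1 ((Finset.mem_filter.1 hp).1)).1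
  have hπpdiv : ∀ i, Pdiv I (π i) := fun i => pdiv_of_subset (hπsub i)
  have hπfine : ∀ i, Fine (δ i) (π i) := by
    intro i p hp
    have h1 := hD p (hπsub i hp)
    have h2 : Δ p.2 = δ i p.2 := by
      rw [hΔeq p (Finset.mem_filter.1 hp).1, (Finset.mem_filter.1 hp).2]
    rwa [h2] at h1
  have hπtag : ∀ i, TagIn (X i) (π i) := by
    intro i p hp
    have := hidxmem p (Finset.mem_filter.1 hp).1
    rwa [(Finset.mem_filter.1 hp).2] at this
  -- fiberwise decomposition of the sum
  have hfib : psum h T = ∑ i ∈ T.image idx, psum h (π i) :=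
    (Finset.sum_fiberwise_of_maps_to (fun p hp => Finset.mem_image_of_mem idx hp)
      (fun p => |h p.1 p.2|)).symm
  -- claim 1 : fiber bounds
  have hclaim1 : ∀ i ∈ T.image idx,
      ENNReal.ofReal (psum h (π i)) ≤ Mloc I h (X N) (Fm i) + e i := by
    intro i hi
    have hiN : i ≤ N := Finset.le_max' _ i hi
    refine le_trans ?_ (add_le_add (Mloc_mono_Y (hmono hiN) (Fm i)) (le_refl (e i)))
    -- work with X i
    obtain ⟨D1, hD1c, hD1sub⟩ := exists_taggedDiv_extend I (δ i) (hδg i) (π i)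
      (hπpdiv i) (hπfine i)
    set C : Finset (Brick ι) := D1.pieces.image Prod.fst with hC
    have hCcov : I.toSet ⊆ ⋃ K ∈ C, K.toSet := by
      intro x hx
      rw [D1.cover] at hx
      obtain ⟨p, hp, hxp⟩ := Set.mem_iUnion₂.1 hx
      exact Set.mem_biUnion (Finset.mem_image_of_mem Prod.fst hp) hxp
    have hFC : Fm i ⊆ C := by
      intro K hK
      obtain ⟨p, hp, rfl⟩ := Finset.mem_image.1 hK
      exact Finset.mem_image_of_mem Prod.fst (hD1sub hp)
    have hmemC : ∀ K ∈ C, ∃ p ∈ D1.pieces, p.1 = K := by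
      intro K hK
      obtain ⟨p, hp, rfl⟩ := Finset.mem_image.1 hK
      exact ⟨p, hp, rfl⟩
    have hinFam : InFam (Fm i) (π i) := by
      intro p hp
      exact ⟨p.1, Finset.mem_image_of_mem Prod.fst hp, subset_rfl⟩
    have hcross : ∀ K ∈ Fm i, ∀ K' ∈ C \ Fm i, K.inter ∩ K'.inter = ∅ := by
      intro K hK K' hK'
      obtain ⟨p, hp, rfl⟩ := Finset.mem_image.1 hK
      obtain ⟨q, hq, rfl⟩ := hmemC K' (Finset.mem_sdiff.1 hK').1
      have hpq : p ≠ q := by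
        intro hh
        apply (Finset.mem_sdiff.1 hK').2
        rw [← hh]
        exact Finset.mem_image_of_mem Prod.fst hp
      exact D1.nonoverlap p (hD1sub hp) q hq hpq
    -- the per-gauge bound
    have hstep : ∀ γ, IsGauge I γ →
        ENNReal.ofReal (psum h (π i)) ≤ Ploc I h γ (X i) (Fm i) + e i := by
      intro γ hγ
      set β : (ι → ℝ) → ℝ := fun x => min (γ x) (δ i x) with hβ
      have hβg : IsGauge I β := fun x hx => lt_min (hγ x hx) (hδg i x hx)
      set σ : (ι → ℝ) → ℝ := faceGauge C β with hσ
      have hσg : IsGauge I σ := faceGauge_gauge hβg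
      have hσβ : ∀ x, σ x ≤ β x := faceGauge_le C β
      set b : ℝ≥0∞ := Ploc I h σ (X i) (C \ Fm i) with hb
      -- f1 : combined bound
      have hf1 : ENNReal.ofReal (psum h (π i)) + b ≤ Wfun I h (X i) (δ i) := by
        rw [hb, Ploc, ENNReal.add_iSup]
        refine iSup_le fun ρ => ?_
        obtain ⟨hρpdiv, hρfine, hρtag, hρfam⟩ := ρ.2
        obtain ⟨hupdiv, _, hupsum⟩ := pdiv_union (h := h) (hπpdiv i) hρpdiv hinFam hρfam hcross
        have hufine : Fine (δ i) (π i ∪ ρ.1) := by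
          intro p hp
          rcases Finset.mem_union.1 hp with hp | hp
          · exact hπfine i p hp
          · refine subset_trans (hρfine p hp) (Metric.ball_subset_ball ?_)
            exact le_trans (hσβ p.2) (min_le_right _ _)
        have hutag : TagIn (X i) (π i ∪ ρ.1) := by
          intro p hp
          rcases Finset.mem_union.1 hp with hp | hp
          exacts [hπtag i p hp, hρtag p hp]
        have := le_Wfun_of_pdiv (h := h) (hδg i) hupdiv hufine hutag
        rw [hupsum, ENNReal.ofReal_add (psum_nonneg h (π i)) (psum_nonneg h ρ.1)] at this
        exact this
      -- f3 : split bound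
      have hf3 : variationOn I h (X i) ≤ Ploc I h γ (X i) (Fm i) + b := by
        rw [variationOn_eq]
        refine le_trans (iInf₂_le σ hσg) (iSup₂_le fun D' hD' => ?_)
        rw [varSum_restr_eq_psum]
        have hsplit := split_bound hadd hFC hCcov (β := β) (Y := X i)
          (pdiv_filter_of_taggedDiv D' (X i)) (fine_filter_of_compat hD' (X i))
          (tagIn_filter D' (X i))
        refine le_trans hsplit (add_le_add ?_ le_rfl)
        exact Ploc_mono_gauge (fun x => min_le_left _ _) (X i) (Fm i)
      -- combine
      have hbtop : b ≠ ⊤ := by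
        have h1 : b ≤ Wfun I h (X i) (δ i) := le_trans le_add_self hf1
        have h2 : Wfun I h (X i) (δ i) ≤ variationOn I h (X i) + e i := hδW i
        exact (lt_of_le_of_lt (h1.trans h2)
          (ENNReal.add_lt_top.2 ⟨lt_of_le_of_lt (hVle i) hS, (hetop i).lt_top⟩)).ne
      have hchain : ENNReal.ofReal (psum h (π i)) + b ≤
          (Ploc I h γ (X i) (Fm i) + e i) + b := by
        calc ENNReal.ofReal (psum h (π i)) + b ≤ variationOn I h (X i) + e i :=
              le_trans hf1 (hδW i)
          _ ≤ (Ploc I h γ (X i) (Fm i) + b) + e i := add_le_add hf3 le_rfl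
          _ = (Ploc I h γ (X i) (Fm i) + e i) + b := by ring
      exact (ENNReal.add_le_add_iff_right hbtop).1 hchain
    -- conclude claim 1 via the infimum
    have h1 : ENNReal.ofReal (psum h (π i)) ≤
        ⨅ γ, ⨅ (_ : γ ∈ {γ : (ι → ℝ) → ℝ | IsGauge I γ}), (Ploc I h γ (X i) (Fm i) + e i) :=
      le_iInf fun γ => le_iInf fun hγ => hstep γ hγ
    rwa [show (⨅ γ, ⨅ (_ : γ ∈ {γ : (ι → ℝ) → ℝ | IsGauge I γ}),
        (Ploc I h γ (X i) (Fm i) + e i)) = Mloc I h (X i) (Fm i) + e i by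
      rw [Mloc, ENNReal.iInf_add]
      exact iInf_congr fun γ => ENNReal.iInf_add.symm] at h1
  -- claim 2 : superadditivity
  have hclaim2 : ∑ i ∈ T.image idx, Mloc I h (X N) (Fm i) ≤ variationOn I h (X N) := by
    refine sum_Mloc_le_variationOn (T.image idx) Fm ?_
    intro i _ j _ hij K hK K' hK'
    obtain ⟨p, hp, rfl⟩ := Finset.mem_image.1 hK
    obtain ⟨q, hq, rfl⟩ := Finset.mem_image.1 hK'
    have hpq : p ≠ q := by
      intro hh
      apply hij
      rw [← (Finset.mem_filter.1 hp).2, ← (Finset.mem_filter.1 hq).2, hh]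
    exact D.nonoverlap p (hπsub i hp) q (hπsub j hq) hpq
  -- final chain
  calc ENNReal.ofReal (psum h T)
      = ∑ i ∈ T.image idx, ENNReal.ofReal (psum h (π i)) := by
        rw [hfib, ENNReal.ofReal_sum_of_nonneg (fun i _ => psum_nonneg h (π i))]
    _ ≤ ∑ i ∈ T.image idx, (Mloc I h (X N) (Fm i) + e i) := Finset.sum_le_sum hclaim1
    _ = (∑ i ∈ T.image idx, Mloc I h (X N) (Fm i)) + ∑ i ∈ T.image idx, e i :=
        Finset.sum_add_distrib
    _ ≤ variationOn I h (X N) + ε := add_le_add hclaim2 (hesum _)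
    _ ≤ S + ε := add_le_add (hVle N) le_rfl

/-- For `h` additive in its brick argument, the variation restricted to an increasing
sequence of sets is continuous from below; in particular the outer measure is continuous
from below. -/
theorem variation_continuous_from_below (I : Brick ι) (h : Brick ι → (ι → ℝ) → ℝ)
    (hadd : ∀ (P : ι → ℝ) (K : Brick ι) (D : TaggedDiv K),
      (∑ p ∈ D.pieces, h p.1 P) = h K P)
    (X : ℕ → Set (ι → ℝ)) (hmono : Monotone X) :
    (variationOn I h (⋃ j, X j) = ⨆ j, variationOn I h (X j)) ∧
    (mustar I (⋃ j, X j) = ⨆ j, mustar I (X j)) := by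
  constructor
  · exact variationOn_iUnion I h hadd X hmono
  · exact variationOn_iUnion I (fun J _ => J.vol) vol_hadd X hmono
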